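/- Suppose x̂ ∉ P and A x̂ ≤ b (componentwise). Then there exists i* ∈ I such that (c*, y*, ε*) = (a_{i*}/‖a_{i*}‖', e_{i*}/‖a_{i*}‖', (a_{i*}ᵀ x̂ − b_{i*})/‖a_{i*}‖') is an optimal solution of GIO_A({x̂}). -/

import Mathlib

open Matrix

/-- Feasibility for the single-point absolute duality gap inverse problem
`GIO_A({x̂})`. -/
def FeasA1 {m n : ℕ} (A : Matrix (Fin m) (Fin n) ℝ) (b : Fin m → ℝ)
    (N : (Fin n → ℝ) → ℝ) (xhat : Fin n → ℝ)
    (c : Fin n → ℝ) (y : Fin m → ℝ) (ε : ℝ) : Prop :=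
  Aᵀ.mulVec y = c ∧ (∀ i, 0 ≤ y i) ∧ c ⬝ᵥ xhat = b ⬝ᵥ y + ε ∧ N c = 1

lemma sum_N_le {n : ℕ} (N : (Fin n → ℝ) → ℝ)
    (hN₁ : ∀ x y, N (x + y) ≤ N x + N y) (hN0 : N 0 = 0)
    {ι : Type*} (g : ι → (Fin n → ℝ)) (s : Finset ι) :
    N (∑ i ∈ s, g i) ≤ ∑ i ∈ s, N (g i) := by
  classical
  induction s using Finset.cons_induction with
  | empty => simp [hN0]
  | cons a s ha ih =>
    rw [Finset.sum_cons, Finset.sum_cons]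
    exact (hN₁ _ _).trans (by linarith)

theorem stmt_5
    (m n : ℕ) (hm : 0 < m) (hn : 0 < n)
    (A : Matrix (Fin m) (Fin n) ℝ) (b : Fin m → ℝ)
    (hrows : ∀ i, A i ≠ 0)
    (hPint : (interior {x : Fin n → ℝ | ∀ i, b i ≤ A.mulVec x i}).Nonempty)
    -- the normalization norm ‖·‖'
    (N : (Fin n → ℝ) → ℝ)
    (hN₁ : ∀ x y, N (x + y) ≤ N x + N y)
    (hN₂ : ∀ (a : ℝ) (x : Fin n → ℝ), N (a • x) = |a| * N x)
    (hN₃ : ∀ x, x ≠ 0 → 0 < N x)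
    -- x̂ ∉ P and A x̂ ≤ b
    (xhat : Fin n → ℝ) (hxnotP : ¬ ∀ i, b i ≤ A.mulVec xhat i)
    (hxle : ∀ i, A.mulVec xhat i ≤ b i) :
    ∃ istar : Fin m,
      FeasA1 A b N xhat ((N (A istar))⁻¹ • A istar)
        ((N (A istar))⁻¹ • (Pi.single istar 1 : Fin m → ℝ))
        ((A istar ⬝ᵥ xhat - b istar) / N (A istar)) ∧
      ∀ c y ε, FeasA1 A b N xhat c y ε →
        |(A istar ⬝ᵥ xhat - b istar) / N (A istar)| ≤ |ε| := by
  classical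
  have hNpos : ∀ i : Fin m, 0 < N (A i) := fun i => hN₃ _ (hrows i)
  have hN0 : N 0 = 0 := by simpa using hN₂ 0 0
  obtain ⟨istar, -, hmin⟩ := Finset.exists_min_image Finset.univ
    (fun i => (b i - A i ⬝ᵥ xhat) / N (A i)) ⟨⟨0, hm⟩, Finset.mem_univ _⟩
  have hNi := hNpos istar
  have hNne : N (A istar) ≠ 0 := ne_of_gt hNi
  set r : ℝ := (b istar - A istar ⬝ᵥ xhat) / N (A istar) with hr
  have hr0 : 0 ≤ r := div_nonneg (by have := hxle istar; simp [Matrix.mulVec] at this; linarith) hNi.le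
  refine ⟨istar, ⟨?_, ?_, ?_, ?_⟩, ?_⟩
  · funext j
    simp [Matrix.mulVec, dotProduct, Pi.single_apply, mul_ite, Finset.sum_ite_eq,
      mul_comm]
  · intro i
    simp only [Pi.smul_apply, Pi.single_apply, smul_eq_mul]
    split <;> positivity
  · rw [smul_dotProduct, dotProduct_smul]
    have hb : b ⬝ᵥ (Pi.single istar 1 : Fin m → ℝ) = b istar := by
      simp [dotProduct, Pi.single_apply]
    rw [hb]
    simp only [smul_eq_mul, div_eq_inv_mul]
    ring
  · rw [hN₂]
    rw [abs_of_pos (by positivity)]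
    field_simp
  · rintro c y ε ⟨hc, hy, hgap, hNc⟩
    -- ε = ∑ i, y i * (A i ⬝ᵥ xhat - b i)
    have hcx : c ⬝ᵥ xhat = y ⬝ᵥ A.mulVec xhat := by
      rw [← hc, Matrix.mulVec_transpose, ← Matrix.dotProduct_mulVec]
    have hε : ε = ∑ i, y i * (A.mulVec xhat i - b i) := by
      have : ε = c ⬝ᵥ xhat - b ⬝ᵥ y := by linarith
      rw [this, hcx]
      simp [dotProduct, Finset.sum_sub_distrib, mul_sub, mul_comm]
    -- c = ∑ i, y i • A i
    have hcsum : c = ∑ i, y i • (A i) := by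
      rw [← hc]; funext j
      simp [Matrix.mulVec, dotProduct, Finset.sum_apply, mul_comm]
    have hsumN : (1:ℝ) ≤ ∑ i, y i * N (A i) := by
      calc (1:ℝ) = N c := hNc.symm
        _ = N (∑ i, y i • (A i)) := by rw [hcsum]
        _ ≤ ∑ i, N (y i • (A i)) := sum_N_le N hN₁ hN0 _ _
        _ = ∑ i, y i * N (A i) := by
            refine Finset.sum_congr rfl fun i _ => ?_
            rw [hN₂, abs_of_nonneg (hy i)]
    have hterm : ∀ i : Fin m, y i * N (A i) * r ≤ y i * (b i - A.mulVec xhat i) := by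
      intro i
      have h1 : r ≤ (b i - A i ⬝ᵥ xhat) / N (A i) := hmin i (Finset.mem_univ i)
      have h2 : N (A i) * r ≤ b i - A i ⬝ᵥ xhat := by
        calc N (A i) * r ≤ N (A i) * ((b i - A i ⬝ᵥ xhat) / N (A i)) := by
              exact mul_le_mul_of_nonneg_left h1 (hNpos i).le
          _ = b i - A i ⬝ᵥ xhat := by
              rw [mul_div_cancel₀ _ (ne_of_gt (hNpos i))]
      have hAi : A.mulVec xhat i = A i ⬝ᵥ xhat := rfl
      rw [hAi, mul_assoc]
      exact mul_le_mul_of_nonneg_left h2 (hy i)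
    have hkey : r ≤ -ε := by
      have h3 : ∑ i, y i * N (A i) * r ≤ ∑ i, y i * (b i - A.mulVec xhat i) :=
        Finset.sum_le_sum fun i _ => hterm i
      have h4 : (∑ i, y i * N (A i)) * r = ∑ i, y i * N (A i) * r := Finset.sum_mul ..
      have h5 : (1:ℝ) * r ≤ (∑ i, y i * N (A i)) * r :=
        mul_le_mul_of_nonneg_right hsumN hr0
      have h6 : -ε = ∑ i, y i * (b i - A.mulVec xhat i) := by
        rw [hε, ← Finset.sum_neg_distrib]
        exact Finset.sum_congr rfl fun i _ => by ring
      rw [h6]; nlinarith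
    have habs : |(A istar ⬝ᵥ xhat - b istar) / N (A istar)| = r := by
      rw [hr, abs_div, abs_of_pos hNi]
      congr 1
      rw [abs_of_nonpos (by have := hxle istar; simp [Matrix.mulVec] at this; linarith)]
      ring
    rw [habs]
    calc r ≤ -ε := hkey
      _ ≤ |ε| := neg_le_abs ε
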